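/- Let D ⊆ ℕ and let g₁, g₂ : D → ℝ satisfy g₂(n) ≥ g₁(n) for all n ∈ D, g₂(n) → −∞ and g₁(n)/n → 0 as n → ∞ along D. Suppose f : D → ℝ and n₀ ∈ D are such that f(n) ≥ g₁(n) for all n ∈ D with n ≥ n₀, and that there are infinitely many n ∈ D with f(n) ≤ g₂(n). Then H̃_f is infinite; moreover, for every a < 0 the function x ↦ f(x) − a·x attains its minimum on D, while for every a ≥ 0 one has inf{f(x) − a·x : x ∈ D} = −∞. -/

import Mathlib

/-- `H̃_f`: points of `D ⊆ ℕ` at which `f(x) − a·x` attains its minimum on `D` for some `a`. -/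
def Htilde (D : Set ℕ) (f : ℕ → ℝ) : Set ℕ :=
  {m | m ∈ D ∧ ∃ a : ℝ, ∀ x ∈ D, f m - a * m ≤ f x - a * x}

open Filter

lemma aux_tendsto_atTop (D : Set ℕ) (g₁ : ℕ → ℝ)
    (hg₁ : Tendsto (fun n : ℕ => g₁ n / n) (atTop ⊓ 𝓟 D) (nhds 0))
    (f : ℕ → ℝ) (n₀ : ℕ) (hf : ∀ n ∈ D, n₀ ≤ n → g₁ n ≤ f n)
    (a : ℝ) (ha : a < 0) :
    Tendsto (fun n : ℕ => f n - a * n) (atTop ⊓ 𝓟 D) atTop := by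
  have h1 : Tendsto (fun n : ℕ => (n : ℝ) * (g₁ n / n - a)) (atTop ⊓ 𝓟 D) atTop := by
    refine Tendsto.atTop_mul_pos (C := -a) (by linarith)
      (tendsto_natCast_atTop_atTop.mono_left inf_le_left) ?_
    simpa using hg₁.sub_const a
  refine tendsto_atTop_mono' _ ?_ h1
  rw [EventuallyLE, eventually_inf_principal]
  filter_upwards [eventually_ge_atTop (max n₀ 1)] with n hn hnD
  have hn1 : 1 ≤ n := le_trans (le_max_right _ _) hn
  have hn0 : n₀ ≤ n := le_trans (le_max_left _ _) hn
  have hne : (n : ℝ) ≠ 0 := by positivity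
  have e : (n : ℝ) * (g₁ n / n - a) = g₁ n - a * n := by field_simp
  rw [e]
  have := hf n hnD hn0
  linarith

lemma aux_min (D : Set ℕ) (g₁ : ℕ → ℝ)
    (hg₁ : Tendsto (fun n : ℕ => g₁ n / n) (atTop ⊓ 𝓟 D) (nhds 0))
    (f : ℕ → ℝ) (n₀ : ℕ) (hn₀ : n₀ ∈ D) (hf : ∀ n ∈ D, n₀ ≤ n → g₁ n ≤ f n)
    (a : ℝ) (ha : a < 0) :
    ∃ m ∈ D, ∀ x ∈ D, f m - a * m ≤ f x - a * x := by
  have hA := aux_tendsto_atTop D g₁ hg₁ f n₀ hf a ha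
  have hev := hA.eventually (eventually_gt_atTop (f n₀ - a * n₀))
  rw [eventually_inf_principal, eventually_atTop] at hev
  obtain ⟨N, hN⟩ := hev
  set S : Set ℕ := {n | n ∈ D ∧ f n - a * n ≤ f n₀ - a * n₀} with hS
  have hfin : S.Finite := by
    refine (Set.finite_Iio N).subset ?_
    intro n hn
    by_contra h
    exact absurd (hN n (le_of_not_gt h) hn.1) (not_lt.2 hn.2)
  have hne : S.Nonempty := ⟨n₀, hn₀, le_refl _⟩
  obtain ⟨m, hmS, hmin⟩ := Set.exists_min_image S (fun n => f n - a * n) hfin hne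
  refine ⟨m, hmS.1, fun x hx => ?_⟩
  by_cases hxS : f x - a * x ≤ f n₀ - a * n₀
  · exact hmin x ⟨hx, hxS⟩
  · have h1 := hmin n₀ ⟨hn₀, le_refl _⟩
    push_neg at hxS
    linarith

lemma aux_inf (D : Set ℕ) (g₂ : ℕ → ℝ)
    (hg₂ : Tendsto g₂ (atTop ⊓ 𝓟 D) atBot)
    (f : ℕ → ℝ) (hinf : {n | n ∈ D ∧ f n ≤ g₂ n}.Infinite)
    (a : ℝ) (ha : 0 ≤ a) (b : ℝ) : ∃ x ∈ D, f x - a * x < b := by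
  have hev := hg₂.eventually (eventually_lt_atBot b)
  rw [eventually_inf_principal, eventually_atTop] at hev
  obtain ⟨N, hN⟩ := hev
  obtain ⟨x, hxS, hx⟩ := hinf.exists_gt N
  have h1 : g₂ x < b := hN x (le_of_lt hx) hxS.1
  have h2 : (0:ℝ) ≤ a * x := by positivity
  have := hxS.2
  exact ⟨x, hxS.1, by linarith⟩

lemma aux_unbdd (D : Set ℕ) (g₁ g₂ : ℕ → ℝ)
    (hgg : ∀ n ∈ D, g₁ n ≤ g₂ n)
    (hg₂ : Tendsto g₂ (atTop ⊓ 𝓟 D) atBot)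
    (hg₁ : Tendsto (fun n : ℕ => g₁ n / n) (atTop ⊓ 𝓟 D) (nhds 0))
    (f : ℕ → ℝ) (n₀ : ℕ) (hn₀ : n₀ ∈ D) (hf : ∀ n ∈ D, n₀ ≤ n → g₁ n ≤ f n)
    (hinf : {n | n ∈ D ∧ f n ≤ g₂ n}.Infinite) (M : ℕ) :
    ∃ m, m ∈ Htilde D f ∧ M < m := by
  set T : Set ℕ := {n | n ∈ D ∧ n ≤ M} with hT
  rcases T.eq_empty_or_nonempty with hTe | hTne
  · obtain ⟨m, hm, hmin⟩ := aux_min D g₁ hg₁ f n₀ hn₀ hf (-1) (by norm_num)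
    refine ⟨m, ⟨hm, -1, hmin⟩, ?_⟩
    by_contra h
    exact absurd hTe (Set.nonempty_iff_ne_empty.1 ⟨m, hm, le_of_not_gt h⟩)
  · have hTfin : T.Finite := (Set.finite_Iic M).subset fun n hn => hn.2
    obtain ⟨c, hcT, hc⟩ := Set.exists_min_image T f hTfin hTne
    have hev := hg₂.eventually (eventually_lt_atBot (f c - 1))
    rw [eventually_inf_principal, eventually_atTop] at hev
    obtain ⟨N, hN⟩ := hev
    obtain ⟨x, hxS, hx⟩ := hinf.exists_gt N
    have hx0 : (0:ℝ) < x := by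
      have : 0 < x := lt_of_le_of_lt (Nat.zero_le N) hx
      exact_mod_cast this
    set a : ℝ := -(1 / (2 * x)) with haa
    have ha : a < 0 := by
      rw [haa]; simp only [neg_neg, neg_lt, neg_zero]; positivity
    obtain ⟨m, hm, hmin⟩ := aux_min D g₁ hg₁ f n₀ hn₀ hf a ha
    refine ⟨m, ⟨hm, a, hmin⟩, ?_⟩
    by_contra h
    have hmT : m ∈ T := ⟨hm, le_of_not_gt h⟩
    have h1 : f c ≤ f m := hc m hmT
    have h2 : a * m ≤ 0 := mul_nonpos_of_nonpos_of_nonneg ha.le (Nat.cast_nonneg m)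
    have h3 : f m - a * m ≤ f x - a * x := hmin x hxS.1
    have h4 : g₂ x < f c - 1 := hN x (le_of_lt hx) hxS.1
    have h5 : f x ≤ g₂ x := hxS.2
    have h6 : a * x = -(1 / 2) := by
      rw [haa]; field_simp
    clear_value a
    linarith

/-- Lemma 3 of the paper: under the stated conditions `H̃_f` is infinite;
for every `a < 0` the function `f(x) − a·x` attains its minimum on `D`, and for `a ≥ 0`
its infimum on `D` is `−∞`. -/
theorem Htilde_infinite_neg_slopes (D : Set ℕ) (g₁ g₂ : ℕ → ℝ)
    (hgg : ∀ n ∈ D, g₁ n ≤ g₂ n)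
    (hg₂ : Filter.Tendsto g₂ (Filter.atTop ⊓ Filter.principal D) Filter.atBot)
    (hg₁ : Filter.Tendsto (fun n : ℕ => g₁ n / n)
      (Filter.atTop ⊓ Filter.principal D) (nhds 0))
    (f : ℕ → ℝ) (n₀ : ℕ) (hn₀ : n₀ ∈ D)
    (hf : ∀ n ∈ D, n₀ ≤ n → g₁ n ≤ f n)
    (hinf : {n | n ∈ D ∧ f n ≤ g₂ n}.Infinite) :
    (Htilde D f).Infinite ∧
      (∀ a : ℝ, a < 0 → ∃ m ∈ D, ∀ x ∈ D, f m - a * m ≤ f x - a * x) ∧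
      (∀ a : ℝ, 0 ≤ a → ∀ b : ℝ, ∃ x ∈ D, f x - a * x < b) := by
  refine ⟨?_, fun a ha => aux_min D g₁ hg₁ f n₀ hn₀ hf a ha,
    fun a ha b => aux_inf D g₂ hg₂ f hinf a ha b⟩
  refine Set.infinite_of_forall_exists_gt fun M => ?_
  exact aux_unbdd D g₁ g₂ hgg hg₂ hg₁ f n₀ hn₀ hf hinf M
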